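/- Let f, g ∈ ℂ[x₁,…,xₙ] be polynomials whose highest homogeneous parts f̄ and ḡ are algebraically independent over ℂ, and let G(x,y) = Σ_{i,j} a_{i,j} x^i y^j ∈ ℂ[x,y]. Then deg G(f,g) = max over pairs (i,j) with a_{i,j} ≠ 0 of (i·deg f + j·deg g), where deg denotes total degree. -/

import Mathlib

open MvPolynomial

/-- The highest homogeneous part of a multivariate polynomial: the sum of all monomials of
maximal total degree. -/
noncomputable def topHomPart {n : ℕ} (f : MvPolynomial (Fin n) ℂ) : MvPolynomial (Fin n) ℂ :=
  homogeneousComponent f.totalDegree f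

private lemma Finsupp.degree_add' {σ : Type*} (a b : σ →₀ ℕ) :
    (a + b).degree = a.degree + b.degree := by
  simp [Finsupp.degree_eq_weight_one, map_add]

private lemma hc_mul {σ : Type*} (a b : ℕ) (p q : MvPolynomial σ ℂ)
    (hp : p.totalDegree ≤ a) (hq : q.totalDegree ≤ b) :
    homogeneousComponent (a + b) (p * q) =
      homogeneousComponent a p * homogeneousComponent b q := by
  classical
  ext d
  rw [coeff_homogeneousComponent, coeff_mul, coeff_mul]
  split_ifs with h
  · apply Finset.sum_congr rfl
    intro x hx
    rw [Finset.HasAntidiagonal.mem_antidiagonal] at hx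
    rw [coeff_homogeneousComponent, coeff_homogeneousComponent]
    have hdeg : x.1.degree + x.2.degree = a + b := by
      rw [← Finsupp.degree_add', hx, h]
    by_cases h1 : x.1.degree = a
    · have h2 : x.2.degree = b := by omega
      rw [if_pos h1, if_pos h2]
    · rcases lt_or_gt_of_ne h1 with hlt | hgt
      · have h2 : ¬ x.2.degree = b := by omega
        have hz : coeff x.2 q = 0 :=
          coeff_eq_zero_of_totalDegree_lt (by
            show q.totalDegree < x.2.degree
            omega)
        rw [hz, mul_zero, if_neg h2, mul_zero]
      · have hz : coeff x.1 p = 0 :=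
          coeff_eq_zero_of_totalDegree_lt (by
            show p.totalDegree < x.1.degree
            omega)
        rw [hz, zero_mul, if_neg h1, zero_mul]
  · symm
    apply Finset.sum_eq_zero
    intro x hx
    rw [Finset.HasAntidiagonal.mem_antidiagonal] at hx
    rw [coeff_homogeneousComponent, coeff_homogeneousComponent]
    by_cases h1 : x.1.degree = a
    · have h2 : ¬ x.2.degree = b := by
        intro h2
        exact h (by rw [← hx, Finsupp.degree_add', h1, h2])
      rw [if_neg h2, mul_zero]
    · rw [if_neg h1, zero_mul]

private lemma hc_pow {n : ℕ} (f : MvPolynomial (Fin n) ℂ) (i : ℕ) :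
    homogeneousComponent (i * f.totalDegree) (f ^ i) = (topHomPart f) ^ i := by
  induction i with
  | zero => simp [topHomPart]
  | succ i ih =>
    have h1 : (i + 1) * f.totalDegree = i * f.totalDegree + f.totalDegree := by ring
    rw [h1, pow_succ, hc_mul _ _ _ _ (f.totalDegree_pow i) le_rfl, ih]
    rw [pow_succ]; rfl

private lemma aeval_pair_monomial {n : ℕ} (u v : MvPolynomial (Fin n) ℂ)
    (m : Fin 2 →₀ ℕ) (a : ℂ) :
    aeval ![u, v] (monomial m a) = C a * (u ^ m 0 * v ^ m 1) := by
  rw [aeval_monomial, Finsupp.prod_pow]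
  simp [Fin.prod_univ_two, algebraMap_eq, mul_assoc]

private lemma hc_aeval_monomial {n : ℕ} (f g : MvPolynomial (Fin n) ℂ)
    (m : Fin 2 →₀ ℕ) (a : ℂ) (D : ℕ)
    (hle : m 0 * f.totalDegree + m 1 * g.totalDegree ≤ D) :
    homogeneousComponent D (aeval ![f, g] (monomial m a)) =
      if m 0 * f.totalDegree + m 1 * g.totalDegree = D then
        aeval ![topHomPart f, topHomPart g] (monomial m a) else 0 := by
  rw [aeval_pair_monomial, aeval_pair_monomial]
  split_ifs with h
  · rw [← h, homogeneousComponent_C_mul,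
      hc_mul _ _ _ _ (f.totalDegree_pow (m 0)) (g.totalDegree_pow (m 1)), hc_pow, hc_pow]
  · apply homogeneousComponent_eq_zero
    have h1 := totalDegree_mul (C a) (f ^ m 0 * g ^ m 1)
    have h2 := totalDegree_mul (f ^ m 0) (g ^ m 1)
    have h3 := totalDegree_pow f (m 0)
    have h4 := totalDegree_pow g (m 1)
    have h5 : (C a : MvPolynomial (Fin n) ℂ).totalDegree = 0 := totalDegree_C a
    omega


/-- If the highest homogeneous parts of `f, g ∈ ℂ[x₁,…,xₙ]` are algebraically independent, then
for `G = ∑ a_{ij} x^i y^j ∈ ℂ[x,y]` one has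
`deg G(f,g) = max {i·deg f + j·deg g : a_{ij} ≠ 0}`. -/
theorem totalDegree_comp_eq_sup (n : ℕ) (f g : MvPolynomial (Fin n) ℂ)
    (hind : AlgebraicIndependent ℂ ![topHomPart f, topHomPart g])
    (G : MvPolynomial (Fin 2) ℂ) :
    (aeval ![f, g] G).totalDegree =
      G.support.sup (fun m => m 0 * f.totalDegree + m 1 * g.totalDegree) := by
  classical
  by_cases hG : G = 0
  · simp [hG]
  set wd : (Fin 2 →₀ ℕ) → ℕ := fun m => m 0 * f.totalDegree + m 1 * g.totalDegree with hwd
  set D := G.support.sup wd with hD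
  have hub : (aeval ![f, g] G).totalDegree ≤ D := by
    conv_lhs => rw [G.as_sum]
    rw [map_sum]
    refine (totalDegree_finset_sum _ _).trans (Finset.sup_le fun m hm => ?_)
    refine le_trans ?_ (Finset.le_sup hm)
    rw [aeval_pair_monomial]
    have h1 := totalDegree_mul (C (coeff m G)) (f ^ m 0 * g ^ m 1)
    have h2 := totalDegree_mul (f ^ m 0) (g ^ m 1)
    have h3 := totalDegree_pow f (m 0)
    have h4 := totalDegree_pow g (m 1)
    have h5 : (C (coeff m G) : MvPolynomial (Fin n) ℂ).totalDegree = 0 :=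
      totalDegree_C (coeff m G)
    simp only [hwd]
    omega
  have key : homogeneousComponent D (aeval ![f, g] G)
      = aeval ![topHomPart f, topHomPart g]
          (∑ m ∈ G.support.filter (fun m => wd m = D), monomial m (coeff m G)) := by
    rw [map_sum, Finset.sum_filter]
    conv_lhs => rw [G.as_sum]
    rw [map_sum, map_sum]
    exact Finset.sum_congr rfl fun m hm =>
      hc_aeval_monomial f g m (coeff m G) D (Finset.le_sup (f := wd) hm)
  obtain ⟨m₀, hm₀, hDm₀⟩ :=
    G.support.exists_mem_eq_sup (Finset.nonempty_iff_ne_empty.mpr (mt MvPolynomial.support_eq_empty.mp hG)) wd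
  have hGd : (∑ m ∈ G.support.filter (fun m => wd m = D), monomial m (coeff m G)) ≠ 0 := by
    intro h0
    have hc0 : coeff m₀
        (∑ m ∈ G.support.filter (fun m => wd m = D), monomial m (coeff m G)) = coeff m₀ G := by
      rw [coeff_sum]
      rw [Finset.sum_congr rfl fun m _ => coeff_monomial m₀ m (coeff m G)]
      rw [Finset.sum_ite_eq' _ m₀ (fun m => coeff m G)]
      rw [if_pos (Finset.mem_filter.mpr ⟨hm₀, hDm₀.symm⟩)]
    rw [h0, coeff_zero] at hc0
    exact (mem_support_iff.mp hm₀) hc0.symm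
  have hne : aeval ![topHomPart f, topHomPart g]
      (∑ m ∈ G.support.filter (fun m => wd m = D), monomial m (coeff m G)) ≠ 0 :=
    fun h => hGd (hind (by rw [h, map_zero]))
  have hlb : D ≤ (aeval ![f, g] G).totalDegree := by
    by_contra hlt
    push_neg at hlt
    exact hne (by rw [← key]; exact homogeneousComponent_eq_zero _ _ hlt)
  exact le_antisymm hub hlb
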